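/- The chromatic number of the n-dimensional associahedron is asymptotically n ln n; that is, the limit as n tends to infinity of α_n/(n ln n) equals 1. -/

import Mathlib

/-- A segment of `[n]₀ = {0,...,n}`: a set `[a,b] = {x : a ≤ x ≤ b}` with
`0 ≤ a ≤ b ≤ n` that is a proper subset of `[n]₀`. -/
def IsSegment (n : ℕ) (S : Finset ℕ) : Prop :=
  ∃ a b : ℕ, a ≤ b ∧ b ≤ n ∧ S = Finset.Icc a b ∧ S ⊂ Finset.range (n + 1)

/-- The segment `[a,b]` precedes the segment `[c,d]` when `a+1 ≤ c ≤ b+1` and `b < d`. -/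
def SegPrecedes (n : ℕ) (S T : Finset ℕ) : Prop :=
  ∃ a b c d : ℕ, a ≤ b ∧ b ≤ n ∧ c ≤ d ∧ d ≤ n ∧
    S = Finset.Icc a b ∧ T = Finset.Icc c d ∧ a + 1 ≤ c ∧ c ≤ b + 1 ∧ b < d

/-- Two segments are separated when one of them precedes the other. -/
def SegSeparated (n : ℕ) (S T : Finset ℕ) : Prop :=
  SegPrecedes n S T ∨ SegPrecedes n T S

/-- A proper colouring of the `n`-dimensional associahedron with `m` colours:
a function from the segments of `[n]₀` to `{1,...,m}` such that any two distinct
segments of the same colour are separated. -/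
def IsProperColouringAssoc (n m : ℕ) (f : Finset ℕ → ℕ) : Prop :=
  (∀ S, IsSegment n S → f S ∈ Finset.Icc 1 m) ∧
  ∀ S T, IsSegment n S → IsSegment n T → S ≠ T → f S = f T → SegSeparated n S T

/-- The chromatic number `α_n` of the `n`-dimensional associahedron: the least `m`
for which a proper colouring with `m` colours exists. -/
noncomputable def assocChromatic (n : ℕ) : ℕ :=
  sInf {m : ℕ | ∃ f : Finset ℕ → ℕ, IsProperColouringAssoc n m f}

namespace AssocAux

open Finset

/-- Arithmetic separation of pairs. -/
def PSep (p q : ℕ × ℕ) : Prop :=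
  (p.1 + 1 ≤ q.1 ∧ q.1 ≤ p.2 + 1 ∧ p.2 < q.2) ∨
  (q.1 + 1 ≤ p.1 ∧ p.1 ≤ q.2 + 1 ∧ q.2 < p.2)

lemma Icc_inj {a b c d : ℕ} (hab : a ≤ b) (hcd : c ≤ d)
    (h : Finset.Icc a b = Finset.Icc c d) : a = c ∧ b = d := by
  have h1 : a ∈ Finset.Icc c d := by rw [← h]; exact mem_Icc.2 ⟨le_rfl, hab⟩
  have h2 : c ∈ Finset.Icc a b := by rw [h]; exact mem_Icc.2 ⟨le_rfl, hcd⟩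
  have h3 : b ∈ Finset.Icc c d := by rw [← h]; exact mem_Icc.2 ⟨hab, le_rfl⟩
  have h4 : d ∈ Finset.Icc a b := by rw [h]; exact mem_Icc.2 ⟨hcd, le_rfl⟩
  simp only [mem_Icc] at h1 h2 h3 h4
  omega

lemma psep_of_segSeparated {n a b c d : ℕ} (hab : a ≤ b) (hcd : c ≤ d)
    (h : SegSeparated n (Finset.Icc a b) (Finset.Icc c d)) : PSep (a, b) (c, d) := by
  rcases h with ⟨a', b', c', d', h1, _, h3, _, hS, hT, h7, h8, h9⟩ |
    ⟨a', b', c', d', h1, _, h3, _, hS, hT, h7, h8, h9⟩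
  · obtain ⟨rfl, rfl⟩ := Icc_inj hab h1 hS
    obtain ⟨rfl, rfl⟩ := Icc_inj hcd h3 hT
    exact Or.inl ⟨h7, h8, h9⟩
  · obtain ⟨rfl, rfl⟩ := Icc_inj hcd h1 hS
    obtain ⟨rfl, rfl⟩ := Icc_inj hab h3 hT
    exact Or.inr ⟨h7, h8, h9⟩

lemma card_le_of_pairwise_psep {T : Finset (ℕ × ℕ)}
    (hsep : ∀ p ∈ T, ∀ q ∈ T, p ≠ q → PSep p q)
    {a b : ℕ} (hmem : (a, b) ∈ T) : T.card ≤ b - a + 2 := by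
  classical
  have key : (T.erase (a, b)).card ≤ (Finset.Icc (a + 1) (b + 1)).card := by
    apply Finset.card_le_card_of_injOn (fun x => if a < x.1 then x.1 else x.2 + 2)
    · intro x hx
      have hxT := Finset.mem_of_mem_erase hx
      have hxne := Finset.ne_of_mem_erase hx
      have hs := hsep x hxT (a, b) hmem hxne
      simp only [PSep] at hs
      simp only [Finset.mem_coe, mem_Icc]
      split_ifs with hcond
      · rcases hs with ⟨u1, u2, u3⟩ | ⟨u1, u2, u3⟩ <;> omega
      · rcases hs with ⟨u1, u2, u3⟩ | ⟨u1, u2, u3⟩ <;> omega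
    · intro x hx y hy hxy
      by_contra hne
      have hsx := hsep x (Finset.mem_of_mem_erase hx) (a, b) hmem (Finset.ne_of_mem_erase hx)
      have hsy := hsep y (Finset.mem_of_mem_erase hy) (a, b) hmem (Finset.ne_of_mem_erase hy)
      have hsxy := hsep x (Finset.mem_of_mem_erase hx) y (Finset.mem_of_mem_erase hy) hne
      simp only [PSep] at hsx hsy hsxy
      dsimp only at hxy
      split_ifs at hxy <;>
        rcases hsx with ⟨u1, u2, u3⟩ | ⟨u1, u2, u3⟩ <;>
        rcases hsy with ⟨v1, v2, v3⟩ | ⟨v1, v2, v3⟩ <;>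
        rcases hsxy with ⟨w1, w2, w3⟩ | ⟨w1, w2, w3⟩ <;> omega
  rw [Finset.card_erase_of_mem hmem, Nat.card_Icc] at key
  have hpos : 0 < T.card := Finset.card_pos.2 ⟨_, hmem⟩
  omega

lemma sum_weight_le_one {T : Finset (ℕ × ℕ)}
    (hsep : ∀ p ∈ T, ∀ q ∈ T, p ≠ q → PSep p q) :
    ∑ p ∈ T, (1 : ℝ) / ((p.2 - p.1 : ℕ) + 2) ≤ 1 := by
  rcases T.eq_empty_or_nonempty with rfl | hne
  · simp
  · have hpos : 0 < T.card := Finset.card_pos.2 hne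
    have h1 : ∑ p ∈ T, (1 : ℝ) / ((p.2 - p.1 : ℕ) + 2) ≤ ∑ _p ∈ T, (1 : ℝ) / T.card := by
      apply Finset.sum_le_sum
      intro p hp
      apply one_div_le_one_div_of_le
      · exact_mod_cast hpos
      · have := card_le_of_pairwise_psep hsep (a := p.1) (b := p.2) (by simpa using hp)
        exact_mod_cast this
    calc ∑ p ∈ T, (1 : ℝ) / ((p.2 - p.1 : ℕ) + 2) ≤ ∑ _p ∈ T, (1 : ℝ) / T.card := h1
      _ = 1 := by
        rw [Finset.sum_const, nsmul_eq_mul]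
        field_simp


open Finset

def SegPairs (n : ℕ) : Finset (ℕ × ℕ) :=
  (Finset.range (n + 1) ×ˢ Finset.range (n + 1)).filter
    fun p => p.1 ≤ p.2 ∧ ¬(p.1 = 0 ∧ p.2 = n)

lemma mem_segPairs {n : ℕ} {p : ℕ × ℕ} :
    p ∈ SegPairs n ↔ p.1 ≤ p.2 ∧ p.2 ≤ n ∧ ¬(p.1 = 0 ∧ p.2 = n) := by
  simp only [SegPairs, mem_filter, mem_product, mem_range]
  omega

lemma range_succ_eq_Icc (n : ℕ) : Finset.range (n + 1) = Finset.Icc 0 n := by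
  ext x; simp [Nat.lt_succ_iff]

lemma isSegment_of_mem {n : ℕ} {p : ℕ × ℕ} (hp : p ∈ SegPairs n) :
    IsSegment n (Finset.Icc p.1 p.2) := by
  rw [mem_segPairs] at hp
  obtain ⟨h1, h2, h3⟩ := hp
  refine ⟨p.1, p.2, h1, h2, rfl, ?_⟩
  rw [range_succ_eq_Icc]
  constructor
  · intro x hx
    simp only [mem_Icc] at hx ⊢
    omega
  · intro hsub
    have h0 : p.1 = 0 := by
      have := hsub (mem_Icc.2 ⟨Nat.zero_le _, Nat.zero_le _⟩)
      simp only [mem_Icc] at this; omega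
    have hn : p.2 = n := by
      have := hsub (mem_Icc.2 ⟨Nat.zero_le _, le_rfl⟩)
      simp only [mem_Icc] at this; omega
    exact h3 ⟨h0, hn⟩

lemma lower_bound {n m : ℕ} {f : Finset ℕ → ℕ} (hf : IsProperColouringAssoc n m f) :
    ∑ p ∈ SegPairs n, (1 : ℝ) / ((p.2 - p.1 : ℕ) + 2) ≤ m := by
  classical
  have hmaps : ∀ p ∈ SegPairs n, f (Finset.Icc p.1 p.2) ∈ Finset.Icc 1 m :=
    fun p hp => hf.1 _ (isSegment_of_mem hp)
  rw [← Finset.sum_fiberwise_of_maps_to hmaps (fun p => (1 : ℝ) / ((p.2 - p.1 : ℕ) + 2))]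
  calc ∑ c ∈ Finset.Icc 1 m, ∑ p ∈ (SegPairs n).filter fun p => f (Finset.Icc p.1 p.2) = c,
        (1 : ℝ) / ((p.2 - p.1 : ℕ) + 2)
      ≤ ∑ _c ∈ Finset.Icc 1 m, (1 : ℝ) := by
        apply Finset.sum_le_sum
        intro c _
        apply sum_weight_le_one
        intro p hp q hq hne
        simp only [mem_filter] at hp hq
        have hps := mem_segPairs.1 hp.1
        have hqs := mem_segPairs.1 hq.1
        have hIcc : Finset.Icc p.1 p.2 ≠ Finset.Icc q.1 q.2 := by
          intro h
          obtain ⟨e1, e2⟩ := Icc_inj hps.1 hqs.1 h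
          exact hne (Prod.ext e1 e2)
        have hsep := hf.2 _ _ (isSegment_of_mem hp.1) (isSegment_of_mem hq.1) hIcc
          (hp.2.trans hq.2.symm)
        exact psep_of_segSeparated hps.1 hqs.1 hsep
    _ = m := by simp


open Finset

def colorPair (p : ℕ × ℕ) : ℕ × ℕ := (p.2 - p.1, p.1 / (p.2 - p.1 + 1))

noncomputable def ColorSet (n : ℕ) : Finset (ℕ × ℕ) := (SegPairs n).image colorPair

noncomputable def colouring (n : ℕ) : Finset ℕ → ℕ := fun S =>
  let c := colorPair (sInf (S : Set ℕ), S.sup id)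
  if h : c ∈ ColorSet n then ((ColorSet n).equivFin ⟨c, h⟩).1 + 1 else 1

lemma sInf_Icc {a b : ℕ} (hab : a ≤ b) : sInf ((Finset.Icc a b : Finset ℕ) : Set ℕ) = a := by
  apply le_antisymm
  · exact Nat.sInf_le (by simp [hab])
  · exact le_csInf ⟨a, by simp [hab]⟩ (fun x hx => by
      simp only [Finset.coe_Icc, Set.mem_Icc] at hx; exact hx.1)

lemma sup_Icc {a b : ℕ} (hab : a ≤ b) : (Finset.Icc a b).sup id = b := by
  apply le_antisymm
  · exact Finset.sup_le fun x hx => (mem_Icc.1 hx).2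
  · exact Finset.le_sup (f := id) (mem_Icc.2 ⟨hab, le_rfl⟩)

lemma colouring_eval {n a b : ℕ} (hab : a ≤ b) (hmem : (a, b) ∈ SegPairs n) :
    colouring n (Finset.Icc a b) =
      ((ColorSet n).equivFin ⟨colorPair (a, b), mem_image_of_mem _ hmem⟩).1 + 1 := by
  unfold colouring
  simp only [sInf_Icc hab, sup_Icc hab]
  exact dif_pos (mem_image_of_mem colorPair hmem)

lemma segPairs_of_isSegment {n : ℕ} {S : Finset ℕ} (hS : IsSegment n S) :
    ∃ a b : ℕ, a ≤ b ∧ S = Finset.Icc a b ∧ (a, b) ∈ SegPairs n := by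
  obtain ⟨a, b, hab, hbn, rfl, hss⟩ := hS
  refine ⟨a, b, hab, rfl, mem_segPairs.2 ⟨hab, hbn, ?_⟩⟩
  rintro ⟨rfl, rfl⟩
  exact hss.ne (range_succ_eq_Icc _).symm

lemma prec_helper {n a b c d ℓ : ℕ} (hab : a ≤ b) (hbn : b ≤ n) (hcd : c ≤ d) (hdn : d ≤ n)
    (hb : b = a + ℓ) (hd : d = c + ℓ) (hdiv : a / (ℓ + 1) = c / (ℓ + 1)) (hac : a < c) :
    SegPrecedes n (Finset.Icc a b) (Finset.Icc c d) := by
  have e1 := Nat.div_add_mod a (ℓ + 1)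
  have e2 := Nat.div_add_mod c (ℓ + 1)
  have m1 : a % (ℓ + 1) < ℓ + 1 := Nat.mod_lt _ (Nat.succ_pos _)
  have m2 : c % (ℓ + 1) < ℓ + 1 := Nat.mod_lt _ (Nat.succ_pos _)
  rw [hdiv] at e1
  exact ⟨a, b, c, d, hab, hbn, hcd, hdn, rfl, rfl, by omega, by omega, by omega⟩

lemma colouring_proper (n : ℕ) : IsProperColouringAssoc n (ColorSet n).card (colouring n) := by
  constructor
  · intro S hS
    obtain ⟨a, b, hab, rfl, hmem⟩ := segPairs_of_isSegment hS
    rw [colouring_eval hab hmem, mem_Icc]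
    have := ((ColorSet n).equivFin ⟨colorPair (a, b), mem_image_of_mem _ hmem⟩).2
    omega
  · intro S T hS hT hne hfe
    obtain ⟨a, b, hab, rfl, hmemS⟩ := segPairs_of_isSegment hS
    obtain ⟨c, d, hcd, rfl, hmemT⟩ := segPairs_of_isSegment hT
    rw [colouring_eval hab hmemS, colouring_eval hcd hmemT] at hfe
    have hfin : ((ColorSet n).equivFin ⟨colorPair (a, b), mem_image_of_mem _ hmemS⟩) =
        ((ColorSet n).equivFin ⟨colorPair (c, d), mem_image_of_mem _ hmemT⟩) := by
      apply Fin.ext; omega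
    have hcp : colorPair (a, b) = colorPair (c, d) := by
      have := (ColorSet n).equivFin.injective hfin
      exact Subtype.ext_iff.1 this
    simp only [colorPair, Prod.mk.injEq] at hcp
    obtain ⟨hlen, hdiv⟩ := hcp
    have hbs := mem_segPairs.1 hmemS
    have hds := mem_segPairs.1 hmemT
    simp only at hbs hds
    rw [← hlen] at hdiv
    have hb : b = a + (b - a) := by omega
    have hd : d = c + (b - a) := by omega
    rcases Nat.lt_trichotomy a c with h | h | h
    · exact Or.inl (prec_helper hab hbs.2.1 hcd hds.2.1 hb hd hdiv h)
    · exact absurd (by subst h; rw [hb, hd] : Finset.Icc a b = Finset.Icc c d) hne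
    · exact Or.inr (prec_helper hcd hds.2.1 hab hbs.2.1 hd hb hdiv.symm h)

lemma colorSet_card_le (n : ℕ) :
    (ColorSet n).card ≤ ∑ ℓ ∈ Finset.range (n + 1), (n / (ℓ + 1) + 1) := by
  classical
  have hsub : ColorSet n ⊆ (Finset.range (n + 1)).biUnion
      (fun ℓ => {ℓ} ×ˢ Finset.range (n / (ℓ + 1) + 1)) := by
    intro c hc
    obtain ⟨p, hp, rfl⟩ := Finset.mem_image.1 hc
    have hps := mem_segPairs.1 hp
    rw [Finset.mem_biUnion]
    refine ⟨p.2 - p.1, by rw [mem_range]; omega, ?_⟩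
    simp only [colorPair, Finset.mem_product, Finset.mem_singleton, Finset.mem_range]
    exact ⟨trivial, Nat.lt_succ_of_le (Nat.div_le_div_right (by omega))⟩
  calc (ColorSet n).card ≤ _ := Finset.card_le_card hsub
    _ ≤ ∑ ℓ ∈ Finset.range (n + 1), ({ℓ} ×ˢ Finset.range (n / (ℓ + 1) + 1)).card :=
      Finset.card_biUnion_le
    _ = ∑ ℓ ∈ Finset.range (n + 1), (n / (ℓ + 1) + 1) := by
      apply Finset.sum_congr rfl
      intro ℓ _
      rw [Finset.card_product, Finset.card_singleton, Finset.card_range, one_mul]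

lemma chromatic_set_nonempty (n : ℕ) :
    {m : ℕ | ∃ f : Finset ℕ → ℕ, IsProperColouringAssoc n m f}.Nonempty :=
  ⟨(ColorSet n).card, colouring n, colouring_proper n⟩

lemma assocChromatic_le (n : ℕ) :
    assocChromatic n ≤ (ColorSet n).card :=
  Nat.sInf_le ⟨colouring n, colouring_proper n⟩

lemma le_assocChromatic (n : ℕ) :
    ∑ p ∈ SegPairs n, (1 : ℝ) / ((p.2 - p.1 : ℕ) + 2) ≤ assocChromatic n := by
  obtain ⟨f, hf⟩ := Nat.sInf_mem (chromatic_set_nonempty n)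
  exact lower_bound hf


open Finset Real

noncomputable def hsum (m : ℕ) : ℝ := ∑ i ∈ Finset.range m, 1 / ((i : ℝ) + 1)

lemma hsum_eq_harmonic (m : ℕ) : hsum m = (harmonic m : ℝ) := by
  unfold hsum harmonic
  push_cast
  apply Finset.sum_congr rfl
  intro i _
  rw [one_div]

lemma log_le_hsum (m : ℕ) : Real.log (m + 1) ≤ hsum m := by
  rw [hsum_eq_harmonic]
  exact_mod_cast log_add_one_le_harmonic m

lemma hsum_le (m : ℕ) : hsum m ≤ 1 + Real.log m := by
  rw [hsum_eq_harmonic]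
  exact_mod_cast harmonic_le_one_add_log m

/-- double sum identity -/
lemma double_sum_eq (f : ℕ → ℝ) (n : ℕ) :
    ∑ b ∈ Finset.range n, ∑ t ∈ Finset.range (b + 1), f t
      = ∑ t ∈ Finset.range n, ((n : ℝ) - t) * f t := by
  induction n with
  | zero => simp
  | succ n ih =>
    rw [Finset.sum_range_succ, ih]
    have key : ∑ t ∈ Finset.range (n + 1), (((n + 1 : ℕ) : ℝ) - ↑t) * f t
        = ∑ t ∈ Finset.range n, ((n : ℝ) - ↑t) * f t + ∑ t ∈ Finset.range (n + 1), f t := by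
      rw [Finset.sum_range_succ (f := fun t => (((n + 1 : ℕ) : ℝ) - ↑t) * f t),
        Finset.sum_range_succ (f := f)]
      have h1 : ∑ t ∈ Finset.range n, (((n + 1 : ℕ) : ℝ) - ↑t) * f t
          = ∑ t ∈ Finset.range n, (((n : ℝ) - ↑t) * f t + f t) := by
        apply Finset.sum_congr rfl
        intro t _
        push_cast
        ring
      rw [h1, Finset.sum_add_distrib]
      push_cast
      ring
    rw [key]

lemma sum_one_div_add_two (n : ℕ) :
    ∑ t ∈ Finset.range n, 1 / ((t : ℝ) + 2) = hsum (n + 1) - 1 := by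
  unfold hsum
  rw [Finset.sum_range_succ' (fun i => 1 / ((i : ℝ) + 1)) n]
  have h : ∀ t ∈ Finset.range n, (1:ℝ)/((t:ℝ)+2) = 1/(((t+1 : ℕ):ℝ)+1) := by
    intro t _; push_cast; ring_nf
  rw [Finset.sum_congr rfl h]
  norm_num

/-- The key lower estimate for the weight sum. -/
lemma wsum_ge (n : ℕ) :
    ((n : ℝ) + 2) * (hsum (n + 1) - 1) - n ≤
      ∑ p ∈ SegPairs n, (1 : ℝ) / ((p.2 - p.1 : ℕ) + 2) := by
  classical
  set Q : Finset (ℕ × ℕ) :=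
    (Finset.range n).biUnion (fun b => (Finset.range (b + 1)).image (fun a => (a, b))) with hQ
  have hQsub : Q ⊆ SegPairs n := by
    intro p hp
    rw [hQ, Finset.mem_biUnion] at hp
    obtain ⟨b, hb, hp⟩ := hp
    rw [Finset.mem_image] at hp
    obtain ⟨a, ha, rfl⟩ := hp
    rw [Finset.mem_range] at hb ha
    rw [mem_segPairs]
    refine ⟨by omega, by omega, by omega⟩
  have hstep1 : ∑ p ∈ Q, (1 : ℝ) / ((p.2 - p.1 : ℕ) + 2)
      ≤ ∑ p ∈ SegPairs n, (1 : ℝ) / ((p.2 - p.1 : ℕ) + 2) := by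
    apply Finset.sum_le_sum_of_subset_of_nonneg hQsub
    intro p _ _
    positivity
  have hdisj : ∀ b₁ ∈ Finset.range n, ∀ b₂ ∈ Finset.range n, b₁ ≠ b₂ →
      Disjoint ((Finset.range (b₁ + 1)).image (fun a => (a, b₁)))
        ((Finset.range (b₂ + 1)).image (fun a => (a, b₂))) := by
    intro b₁ _ b₂ _ hne
    rw [Finset.disjoint_left]
    intro p hp1 hp2
    rw [Finset.mem_image] at hp1 hp2
    obtain ⟨a1, _, rfl⟩ := hp1
    obtain ⟨a2, _, h2⟩ := hp2
    have hb := congrArg Prod.snd h2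
    simp only at hb
    exact hne hb.symm
  have hstep2 : ∑ p ∈ Q, (1 : ℝ) / ((p.2 - p.1 : ℕ) + 2)
      = ∑ b ∈ Finset.range n, ∑ t ∈ Finset.range (b + 1), 1 / ((t : ℝ) + 2) := by
    rw [hQ, Finset.sum_biUnion hdisj]
    apply Finset.sum_congr rfl
    intro b _
    rw [Finset.sum_image (by intro x _ y _ h; exact (Prod.ext_iff.1 h).1)]
    have := Finset.sum_range_reflect (fun t => 1 / ((t : ℝ) + 2)) (b + 1)
    simp only [Nat.add_sub_cancel] at this
    calc ∑ a ∈ Finset.range (b + 1), (1 : ℝ) / (((b - a : ℕ) : ℝ) + 2)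
        = ∑ a ∈ Finset.range (b + 1), (1 : ℝ) / (((b + 1 - 1 - a : ℕ) : ℝ) + 2) := by
          apply Finset.sum_congr rfl; intro a _; norm_num
      _ = ∑ t ∈ Finset.range (b + 1), 1 / ((t : ℝ) + 2) :=
          Finset.sum_range_reflect (fun t => 1 / ((t : ℝ) + 2)) (b + 1)
  have hstep3 : ∑ b ∈ Finset.range n, ∑ t ∈ Finset.range (b + 1), 1 / ((t : ℝ) + 2)
      = ∑ t ∈ Finset.range n, ((n : ℝ) - t) * (1 / ((t : ℝ) + 2)) :=
    double_sum_eq _ n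
  have hstep4 : ∑ t ∈ Finset.range n, ((n : ℝ) - t) * (1 / ((t : ℝ) + 2))
      = ((n : ℝ) + 2) * (hsum (n + 1) - 1) - n := by
    have h1 : ∀ t ∈ Finset.range n, ((n : ℝ) - t) * (1 / ((t : ℝ) + 2))
        = ((n : ℝ) + 2) * (1 / ((t : ℝ) + 2)) - 1 := by
      intro t _
      have ht : ((t : ℝ) + 2) ≠ 0 := by positivity
      field_simp
      ring
    rw [Finset.sum_congr rfl h1, Finset.sum_sub_distrib, ← Finset.mul_sum,
      sum_one_div_add_two, Finset.sum_const, Finset.card_range, nsmul_eq_mul, mul_one]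
  linarith [hstep1, hstep2.symm.le]

lemma card_colorSet_real (n : ℕ) :
    ((ColorSet n).card : ℝ) ≤ (n : ℝ) * hsum (n + 1) + (n + 1) := by
  have h1 : ((ColorSet n).card : ℝ) ≤ ∑ ℓ ∈ Finset.range (n + 1), (((n / (ℓ + 1) : ℕ) : ℝ) + 1) := by
    have := colorSet_card_le n
    calc ((ColorSet n).card : ℝ) ≤ ((∑ ℓ ∈ Finset.range (n + 1), (n / (ℓ + 1) + 1) : ℕ) : ℝ) := by
          exact_mod_cast this
      _ = ∑ ℓ ∈ Finset.range (n + 1), (((n / (ℓ + 1) : ℕ) : ℝ) + 1) := by push_cast; rfl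
  have h2 : ∑ ℓ ∈ Finset.range (n + 1), (((n / (ℓ + 1) : ℕ) : ℝ) + 1)
      ≤ ∑ ℓ ∈ Finset.range (n + 1), ((n : ℝ) / ((ℓ : ℝ) + 1) + 1) := by
    apply Finset.sum_le_sum
    intro ℓ _
    have := Nat.cast_div_le (m := n) (n := ℓ + 1) (α := ℝ)
    push_cast at this
    linarith
  have h3 : ∑ ℓ ∈ Finset.range (n + 1), ((n : ℝ) / ((ℓ : ℝ) + 1) + 1)
      = (n : ℝ) * hsum (n + 1) + (n + 1) := by
    rw [Finset.sum_add_distrib, Finset.sum_const, Finset.card_range, nsmul_eq_mul, mul_one]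
    unfold hsum
    rw [Finset.mul_sum]
    congr 1
    apply Finset.sum_congr rfl
    intro i _
    rw [mul_one_div]
    norm_num
  linarith


open Finset Real Filter

lemma alpha_lower (n : ℕ) (hn : 2 ≤ n) :
    (n : ℝ) * Real.log n - 4 * n ≤ (assocChromatic n : ℝ) := by
  have h1 := le_assocChromatic n
  have h2 := wsum_ge n
  have h3 : Real.log n ≤ Real.log (n + 2) := by
    apply Real.log_le_log (by positivity)
    push_cast; linarith
  have h4 : Real.log (n + 2) ≤ hsum (n + 1) := by
    have := log_le_hsum (n + 1)
    push_cast at this ⊢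
    convert this using 2
    ring
  have h5 : (0 : ℝ) ≤ Real.log n := Real.log_nonneg (by exact_mod_cast Nat.one_le_iff_ne_zero.2 (by omega))
  have hnR : (2 : ℝ) ≤ n := by exact_mod_cast hn
  have h6 : ((n : ℝ) + 2) * Real.log n ≤ ((n : ℝ) + 2) * hsum (n + 1) :=
    mul_le_mul_of_nonneg_left (h3.trans h4) (by positivity)
  nlinarith [h1, h2, h5, h6]

lemma alpha_upper (n : ℕ) (hn : 2 ≤ n) :
    (assocChromatic n : ℝ) ≤ (n : ℝ) * Real.log n + 4 * n := by
  have h1 : (assocChromatic n : ℝ) ≤ ((ColorSet n).card : ℝ) := by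
    exact_mod_cast assocChromatic_le n
  have h2 := card_colorSet_real n
  have h3 : hsum (n + 1) ≤ 1 + Real.log (n + 1) := by
    have := hsum_le (n + 1)
    push_cast at this ⊢
    exact this
  have h4 : Real.log ((n : ℝ) + 1) ≤ 1 + Real.log n := by
    have hle : ((n : ℝ) + 1) ≤ 2 * n := by
      have : (2 : ℝ) ≤ n := by exact_mod_cast hn
      linarith
    have := Real.log_le_log (by positivity) hle
    rw [Real.log_mul (by norm_num) (by positivity)] at this
    have h2' : Real.log 2 ≤ 1 := by
      have := Real.log_two_lt_d9
      linarith
    linarith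
  have hn1 : (2 : ℝ) ≤ n := by exact_mod_cast hn
  nlinarith [h1, h2, h3, h4]


end AssocAux

/-- Theorem (asymptotics): `α_n ∼ n ln n`, i.e. `α_n / (n ln n) → 1` as `n → ∞`. -/
theorem assocChromatic_asymptotic :
    Filter.Tendsto (fun n : ℕ => (assocChromatic n : ℝ) / ((n : ℝ) * Real.log n))
      Filter.atTop (nhds 1) := by
  have hlog : Filter.Tendsto (fun n : ℕ => Real.log n) Filter.atTop Filter.atTop :=
    Real.tendsto_log_atTop.comp tendsto_natCast_atTop_atTop
  have h0 : Filter.Tendsto (fun n : ℕ => 4 / Real.log n) Filter.atTop (nhds 0) := by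
    have := hlog.inv_tendsto_atTop.const_mul (4 : ℝ)
    simpa [div_eq_mul_inv] using this
  have hlo : Filter.Tendsto (fun n : ℕ => 1 - 4 / Real.log n) Filter.atTop (nhds 1) := by
    have := (tendsto_const_nhds (x := (1 : ℝ)) (f := Filter.atTop (α := ℕ))).sub h0
    simpa using this
  have hhi : Filter.Tendsto (fun n : ℕ => 1 + 4 / Real.log n) Filter.atTop (nhds 1) := by
    have := (tendsto_const_nhds (x := (1 : ℝ)) (f := Filter.atTop (α := ℕ))).add h0
    simpa using this
  apply tendsto_of_tendsto_of_tendsto_of_le_of_le' hlo hhi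
  · filter_upwards [Filter.eventually_ge_atTop 2] with n hn
    have hnR : (2 : ℝ) ≤ n := by exact_mod_cast hn
    have hlogpos : 0 < Real.log n := Real.log_pos (by linarith)
    have hnpos : (0 : ℝ) < n := by linarith
    have hpos : 0 < (n : ℝ) * Real.log n := by positivity
    have hA := AssocAux.alpha_lower n hn
    have key : ((n : ℝ) * Real.log n - 4 * n) / ((n : ℝ) * Real.log n)
        = 1 - 4 / Real.log n := by
      field_simp
    rw [← key]
    exact (div_le_div_iff_of_pos_right hpos).2 hA
  · filter_upwards [Filter.eventually_ge_atTop 2] with n hn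
    have hnR : (2 : ℝ) ≤ n := by exact_mod_cast hn
    have hlogpos : 0 < Real.log n := Real.log_pos (by linarith)
    have hnpos : (0 : ℝ) < n := by linarith
    have hpos : 0 < (n : ℝ) * Real.log n := by positivity
    have hB := AssocAux.alpha_upper n hn
    have key : ((n : ℝ) * Real.log n + 4 * n) / ((n : ℝ) * Real.log n)
        = 1 + 4 / Real.log n := by
      field_simp
    rw [← key]
    exact (div_le_div_iff_of_pos_right hpos).2 hB
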